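/- Let L(k) = L + kE be a family of n×n real matrices where L and E are connection matrices (off-diagonal entries nonnegative, columns summing to zero), with L(k) irreducible. Let R be a real diagonal matrix and let ρ(k) = s(L(k)+R) be the spectral bound with normalized positive eigenvector x(k) satisfying (L(k)+R)x = ρ(k)x. Suppose there exists a vector v ∈ ℝⁿ with positive entries such that v_i(ℓ_{ij}+k e_{ij}) = v_j(ℓ_{ji}+k e_{ji}) for all i,j (i.e. diag(v)·L(k) is symmetric). Then ρ'(k) = ((E x ∘ x)·v)/((x ∘ x)·v), where ∘ denotes the Hadamard (componentwise) product. -/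

import Mathlib

open Matrix

/-- Spectral bound: maximum real part of the (complex) eigenvalues. -/
noncomputable def specBound {n : ℕ} (M : Matrix (Fin n) (Fin n) ℝ) : ℝ :=
  sSup {t : ℝ | ∃ μ ∈ spectrum ℂ (M.map Complex.ofReal), μ.re = t}

/-- Irreducibility of a matrix (no nontrivial invariant subset of indices). -/
def MatIrreducible {n : ℕ} (M : Matrix (Fin n) (Fin n) ℝ) : Prop :=
  ∀ S : Finset (Fin n), S.Nonempty → S ≠ Finset.univ →
    ∃ i ∈ S, ∃ j, j ∉ S ∧ M j i ≠ 0

/-- For the family `L(k) = L + kE` of connection matrices with a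
symmetrizing positive vector `v`, the derivative of the spectral bound
`ρ(k) = s(L(k)+R)` satisfies `ρ'(k) = ((E x ∘ x)·v)/((x ∘ x)·v)`. -/
theorem rho_deriv_formula {n : ℕ} (hn : 0 < n)
    (L E : Matrix (Fin n) (Fin n) ℝ)
    (hLoff : ∀ i j, i ≠ j → 0 ≤ L i j) (hLcol : ∀ j, ∑ i, L i j = 0)
    (hEoff : ∀ i j, i ≠ j → 0 ≤ E i j) (hEcol : ∀ j, ∑ i, E i j = 0)
    (hirr : ∀ k : ℝ, 0 ≤ k → MatIrreducible (L + k • E))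
    (r : Fin n → ℝ) (v : Fin n → ℝ) (hv : ∀ i, 0 < v i)
    (hsym : ∀ k : ℝ, 0 ≤ k → ∀ i j, v i * (L i j + k * E i j) = v j * (L j i + k * E j i))
    (ρ : ℝ → ℝ) (x : ℝ → Fin n → ℝ) (hx : ∀ k i, 0 < x k i)
    (hρspec : ∀ k : ℝ, 0 ≤ k → ρ k = specBound (L + k • E + Matrix.diagonal r))
    (heig : ∀ k : ℝ, (L + k • E + Matrix.diagonal r).mulVec (x k) = ρ k • x k)
    (k₀ : ℝ) (hk₀ : 0 ≤ k₀) (ρ'v : ℝ) (x' : Fin n → ℝ)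
    (hρ' : HasDerivAt ρ ρ'v k₀)
    (hx' : ∀ i, HasDerivAt (fun k => x k i) (x' i) k₀) :
    ρ'v = (∑ i, (E.mulVec (x k₀)) i * x k₀ i * v i) /
      (∑ i, x k₀ i * x k₀ i * v i) := by

  have hne : Nonempty (Fin n) := ⟨⟨0, hn⟩⟩
  set y := x k₀ with hy
  set A : Matrix (Fin n) (Fin n) ℝ := L + k₀ • E + Matrix.diagonal r with hA
  have hAapp : ∀ i j, A i j = L i j + k₀ * E i j + Matrix.diagonal r i j := by
    intro i j
    simp [hA, Matrix.add_apply, Matrix.smul_apply, smul_eq_mul]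
  have hAsym : ∀ i j, v i * A i j = v j * A j i := by
    intro i j
    by_cases hij : i = j
    · subst hij; ring
    · rw [hAapp, hAapp, Matrix.diagonal_apply_ne _ hij,
        Matrix.diagonal_apply_ne _ (Ne.symm hij)]
      have := hsym k₀ hk₀ i j
      linarith [this]
  have hkey : ∀ i, E.mulVec y i + A.mulVec x' i = ρ'v * y i + ρ k₀ * x' i := by
    intro i
    have h1 : HasDerivAt (fun k => ρ k * x k i) (ρ'v * y i + ρ k₀ * x' i) k₀ :=
      hρ'.mul (hx' i)
    have h2 : HasDerivAt
        (fun k => ∑ j, (L i j + k * E i j + Matrix.diagonal r i j) * x k j)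
        (∑ j, (E i j * y j + (L i j + k₀ * E i j + Matrix.diagonal r i j) * x' j)) k₀ := by
      apply HasDerivAt.fun_sum
      intro j _
      have hu : HasDerivAt (fun k : ℝ => L i j + k * E i j + Matrix.diagonal r i j)
          (E i j) k₀ := by
        simpa using (((hasDerivAt_id k₀).mul_const (E i j)).const_add (L i j)).add_const
          (Matrix.diagonal r i j)
      simpa using hu.fun_mul (hx' j)
    have heq : (fun k => ∑ j, (L i j + k * E i j + Matrix.diagonal r i j) * x k j)
        = fun k => ρ k * x k i := by
      funext k
      have h := congrFun (heig k) i
      simp only [Matrix.mulVec, dotProduct, Matrix.add_apply, Matrix.smul_apply,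
        smul_eq_mul, Pi.smul_apply] at h
      simpa using h
    rw [heq] at h2
    have h3 := h2.unique h1
    rw [Finset.sum_add_distrib] at h3
    have e1 : E.mulVec y i = ∑ j, E i j * y j := by
      simp [Matrix.mulVec, dotProduct]
    have e2 : A.mulVec x' i = ∑ j, (L i j + k₀ * E i j + Matrix.diagonal r i j) * x' j := by
      simp only [Matrix.mulVec, dotProduct]
      exact Finset.sum_congr rfl fun j _ => by rw [hAapp]
    rw [e1, e2, h3]
  have hswap : ∑ i, v i * y i * A.mulVec x' i = ∑ i, v i * x' i * A.mulVec y i := by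
    simp only [Matrix.mulVec, dotProduct, Finset.mul_sum]
    rw [Finset.sum_comm]
    refine Finset.sum_congr rfl fun j _ => Finset.sum_congr rfl fun i _ => ?_
    have h := hAsym i j
    linear_combination (y i * x' j) * h
  have hAy : ∀ i, A.mulVec y i = ρ k₀ * y i := by
    intro i
    have := congrFun (heig k₀) i
    simpa [hA] using this
  have hsum : ∑ i, v i * y i * (E.mulVec y i + A.mulVec x' i)
      = ∑ i, v i * y i * (ρ'v * y i + ρ k₀ * x' i) := by
    exact Finset.sum_congr rfl fun i _ => by rw [hkey i]
  simp only [mul_add, Finset.sum_add_distrib] at hsum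
  rw [hswap] at hsum
  have hAy' : ∑ i, v i * x' i * A.mulVec y i = ρ k₀ * ∑ i, v i * y i * x' i := by
    rw [Finset.mul_sum]
    exact Finset.sum_congr rfl fun i _ => by rw [hAy i]; ring
  rw [hAy'] at hsum
  have hnum : ∑ i, v i * y i * E.mulVec y i = ∑ i, E.mulVec y i * y i * v i :=
    Finset.sum_congr rfl fun i _ => by ring
  have hden : ∑ i, v i * y i * (ρ'v * y i) = ρ'v * ∑ i, y i * y i * v i := by
    rw [Finset.mul_sum]; exact Finset.sum_congr rfl fun i _ => by ring
  have hlast : ∑ i, v i * y i * (ρ k₀ * x' i) = ρ k₀ * ∑ i, v i * y i * x' i := by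
    rw [Finset.mul_sum]; exact Finset.sum_congr rfl fun i _ => by ring
  rw [hnum, hden, hlast] at hsum
  have hS : 0 < ∑ i, y i * y i * v i :=
    Finset.sum_pos (fun i _ => mul_pos (mul_pos (hx k₀ i) (hx k₀ i)) (hv i)) Finset.univ_nonempty
  rw [eq_div_iff (ne_of_gt hS)]
  linarith [hsum]
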